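/- Let p be an H₂-valued seminorm on a topological H₂-module X, and set A = {x ∈ X : p(x) ≺ 1} and C = {x ∈ X : p(x) ⪯ 1}. Then the following statements are equivalent: (i) p is continuous; (ii) A is open; (iii) 0 belongs to the interior of A; (iv) 0 belongs to the interior of C; (v) p is continuous at 0; (vi) there exists a continuous H₂-valued seminorm q on X such that p(x) ⪯ q(x) for all x ∈ X. -/

import Mathlib

open Pointwise

/-- The ring of bihyperbolic numbers in its idempotent representation:
componentwise operations on `Fin 4 → ℝ`. -/
abbrev D : Type := Fin 4 → ℝ

/-- The idempotents `eᵢ`. -/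
noncomputable def e (i : Fin 4) : D := Pi.single i 1

/-- The bihyperbolic-valued modulus: componentwise absolute value. -/
def dabs (a : D) : D := fun i => |a i|

/-- Strict componentwise inequality `a ≺ b`. -/
def sLt (a b : D) : Prop := ∀ i, a i < b i

/-- The ring homomorphism `ℝ → D` sending `r` to the constant function `r`. -/
def rconst (a : ℝ) : D := fun _ => a

/-- A set `B` in an `H₂`-module is `H₂`-balanced if `c • x ∈ B` whenever
`x ∈ B` and `|c| ⪯ 1`. -/
def H2Balanced {X : Type*} [AddCommGroup X] [Module D X] (B : Set X) : Prop :=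
  ∀ x ∈ B, ∀ c : D, dabs c ≤ 1 → c • x ∈ B

/-- A set `B` in an `H₂`-module is `H₂`-convex if `c • x + (1 - c) • y ∈ B`
for all `x, y ∈ B` and `0 ⪯ c ⪯ 1`. -/
def H2Convex {X : Type*} [AddCommGroup X] [Module D X] (B : Set X) : Prop :=
  ∀ x ∈ B, ∀ y ∈ B, ∀ c : D, 0 ≤ c → c ≤ 1 → c • x + (1 - c) • y ∈ B

/-- A set `B` in an `H₂`-module is `H₂`-absorbing if every `x` admits `ε ≻ 0`
with `c • x ∈ B` whenever `0 ⪯ c ⪯ ε`. -/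
def H2Absorbing {X : Type*} [AddCommGroup X] [Module D X] (B : Set X) : Prop :=
  ∀ x : X, ∃ ε : D, sLt 0 ε ∧ ∀ c : D, 0 ≤ c → c ≤ ε → c • x ∈ B

/-- An `H₂`-valued seminorm. -/
def IsH2Seminorm {X : Type*} [AddCommGroup X] [Module D X] (p : X → D) : Prop :=
  (∀ c : D, ∀ x : X, p (c • x) = dabs c * p x) ∧ ∀ x y : X, p (x + y) ≤ p x + p y

/-- An `H₂`-valued norm. -/
def IsH2Norm {X : Type*} [AddCommGroup X] [Module D X] (N : X → D) : Prop :=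
  (∀ x : X, N x = 0 ↔ x = 0) ∧ (∀ c : D, ∀ x : X, N (c • x) = dabs c * N x) ∧
    ∀ x y : X, N (x + y) ≤ N x + N y

/-- A subset of a topological `H₂`-module is bounded if every neighbourhood of `0`
absorbs it. -/
def H2Bounded {X : Type*} [AddCommGroup X] [Module D X] [TopologicalSpace X]
    (B : Set X) : Prop :=
  ∀ U ∈ nhds (0 : X), ∃ c : D, sLt 0 c ∧ B ⊆ c • U

/-- The `H₂`-valued Minkowski functional of a set `B`, defined componentwise. -/
noncomputable def minkowski {X : Type*} [AddCommGroup X] [Module D X]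
    (B : Set X) (x : X) : D :=
  fun i => sInf {t : ℝ | ∃ α : D, sLt 0 α ∧ x ∈ α • B ∧ α i = t}
section Aux
variable {X : Type*} [AddCommGroup X] [Module D X] {p : X → D}

lemma h2sem_zero (hp : IsH2Seminorm p) : p 0 = 0 := by
  have h := hp.1 0 0
  have h0 : dabs (0 : D) = 0 := by funext i; simp [dabs]
  rw [zero_smul, h0, zero_mul] at h
  exact h

lemma h2sem_neg (hp : IsH2Seminorm p) (x : X) : p (-x) = p x := by
  have h := hp.1 (-1) x
  have h1 : dabs (-1 : D) = 1 := by funext i; simp [dabs]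
  rw [neg_one_smul, h1, one_mul] at h
  exact h

lemma h2sem_nonneg (hp : IsH2Seminorm p) (x : X) : (0 : D) ≤ p x := by
  have h := hp.2 x (-x)
  rw [add_neg_cancel, h2sem_zero hp, h2sem_neg hp] at h
  intro i
  have := h i
  simp only [Pi.zero_apply, Pi.add_apply] at this ⊢
  linarith

lemma h2sem_abs_sub (hp : IsH2Seminorm p) (x y : X) (i : Fin 4) :
    |p x i - p y i| ≤ p (x - y) i := by
  have h1 := hp.2 (x - y) y
  rw [sub_add_cancel] at h1
  have h2 := hp.2 (y - x) x
  rw [sub_add_cancel] at h2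
  have hn : p (y - x) = p (x - y) := by rw [← neg_sub, h2sem_neg hp]
  rw [hn] at h2
  rw [abs_sub_le_iff]
  refine ⟨?_, ?_⟩
  · have := h1 i; simp only [Pi.add_apply] at this; linarith
  · have := h2 i; simp only [Pi.add_apply] at this; linarith

end Aux

/-- For an `H₂`-valued seminorm `p` on a topological `H₂`-module, with
`A = {x : p x ≺ 1}` and `C = {x : p x ⪯ 1}`, the following are equivalent:
continuity of `p`; openness of `A`; `0 ∈ interior A`; `0 ∈ interior C`;
continuity of `p` at `0`; domination by some continuous `H₂`-valued seminorm. -/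
theorem seminorm_continuity_tfae {X : Type*} [AddCommGroup X] [Module D X]
    [TopologicalSpace X] [T2Space X] [ContinuousAdd X] [ContinuousSMul D X]
    (p : X → D) (hp : IsH2Seminorm p) :
    List.TFAE [Continuous p,
      IsOpen {x : X | sLt (p x) 1},
      (0 : X) ∈ interior {x : X | sLt (p x) 1},
      (0 : X) ∈ interior {x : X | p x ≤ 1},
      ContinuousAt p 0,
      ∃ q : X → D, IsH2Seminorm q ∧ Continuous q ∧ ∀ x : X, p x ≤ q x] := by
  tfae_have 1 → 2 := by
    intro h1
    have he : {x : X | sLt (p x) 1} = p ⁻¹' (⋂ i, {a : D | a i < 1}) := by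
      ext x
      simp [sLt, Set.mem_iInter]
    rw [he]
    exact ((isOpen_iInter_of_finite
      fun i => (isOpen_Iio (a := (1:ℝ))).preimage (continuous_apply i)).preimage h1)
  tfae_have 2 → 3 := by
    intro h2
    rw [h2.interior_eq]
    intro i
    simp [h2sem_zero hp]
  tfae_have 3 → 4 := by
    intro h3
    refine interior_mono ?_ h3
    intro x hx i
    exact le_of_lt (hx i)
  tfae_have 4 → 5 := by
    intro h4
    rw [ContinuousAt, h2sem_zero hp, tendsto_pi_nhds]
    intro i
    rw [Metric.tendsto_nhds]
    intro ε hε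
    set c : D := rconst (2/ε) with hc
    have hcont : Continuous (fun x : X => c • x) := continuous_const_smul c
    have hV : IsOpen ((fun x : X => c • x) ⁻¹' interior {x : X | p x ≤ 1}) :=
      isOpen_interior.preimage hcont
    have h0V : (0 : X) ∈ (fun x : X => c • x) ⁻¹' interior {x : X | p x ≤ 1} := by
      simpa [smul_zero] using h4
    filter_upwards [hV.mem_nhds h0V] with x hx
    have hle : p (c • x) ≤ 1 := interior_subset hx
    rw [hp.1 c x] at hle
    have hle' := hle i
    have habs : dabs c i = 2/ε := by
      simp only [dabs, hc, rconst]
      rw [abs_of_pos (by positivity)]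
    rw [Pi.mul_apply, habs, Pi.one_apply] at hle'
    have hnn : 0 ≤ p x i := h2sem_nonneg hp x i
    have hpx : p x i ≤ ε / 2 := by
      rw [div_mul_eq_mul_div, div_le_one hε] at hle'
      linarith
    rw [Real.dist_eq, Pi.zero_apply, sub_zero, abs_of_nonneg hnn]
    linarith
  tfae_have 5 → 1 := by
    intro h5
    have h0 : Filter.Tendsto p (nhds 0) (nhds 0) := by
      rw [← h2sem_zero hp]; exact h5
    rw [continuous_iff_continuousAt]
    intro x
    rw [ContinuousAt, tendsto_pi_nhds]
    intro i
    have hsub : Filter.Tendsto (fun y : X => y - x) (nhds x) (nhds 0) := by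
      simp only [sub_eq_add_neg]
      have := (continuous_id.add (continuous_const (y := -x))).tendsto x
      simpa [Pi.add_def] using this
    have h0i : Filter.Tendsto (fun z : X => p z i) (nhds 0) (nhds 0) := by
      have := (tendsto_pi_nhds.mp h0) i
      simpa using this
    have key : Filter.Tendsto (fun y : X => p y i - p x i) (nhds x) (nhds 0) := by
      refine squeeze_zero_norm (a := fun y : X => p (y - x) i) (fun y => ?_) (h0i.comp hsub)
      rw [Real.norm_eq_abs]
      exact h2sem_abs_sub hp y x i
    have := key.const_add (p x i)
    simpa using this
  tfae_have 1 → 6 := fun h1 => ⟨p, hp, h1, fun x => le_refl _⟩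
  tfae_have 6 → 5 := by
    rintro ⟨q, hq, hqc, hle⟩
    rw [ContinuousAt, h2sem_zero hp, tendsto_pi_nhds]
    intro i
    apply squeeze_zero (fun y => h2sem_nonneg hp y i) (fun y => hle y i)
    have := ((continuous_apply i).comp hqc).tendsto 0
    simpa [h2sem_zero hq, Function.comp_def] using this
  tfae_finish
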